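/- arXiv:2010.08025 — 3 statements merged into one kernel-verified Lean document; each statement's English description precedes it below -/
import Mathlib

section
/- If two finite observables A (outcome set Ω_A) and B (outcome set Ω_B) on a finite-dimensional complex Hilbert space H coexist, then A and B are jointly measurable: for every state ρ on H there exists a function μ_ρ : Ω_A × Ω_B → [0,1] with ∑_{(x,y)} μ_ρ(x,y) = 1 such that ∑_{y∈Ω_B} μ_ρ(x,y) = Φ_ρ^A(x) for every x ∈ Ω_A and ∑_{x∈Ω_A} μ_ρ(x,y) = Φ_ρ^B(y) for every y ∈ Ω_B. -/
open Matrix BigOperators Finset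
open scoped ComplexOrder

lemma trace_mul_psd_nonneg' {d : ℕ} {ρ M : Matrix (Fin d) (Fin d) ℂ}
    (hρ : ρ.PosSemidef) (hM : M.PosSemidef) : 0 ≤ (ρ * M).trace := by
  open scoped MatrixOrder Matrix.Norms.L2Operator in
  obtain ⟨S, rfl⟩ := CStarAlgebra.nonneg_iff_eq_star_mul_self.mp hρ.nonneg
  rw [Matrix.mul_assoc, Matrix.trace_mul_comm]
  have hN : (S * M * Sᴴ).PosSemidef := hM.mul_mul_conjTranspose_same S
  rw [Matrix.trace]
  apply Finset.sum_nonneg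
  intro i _
  have := hN.dotProduct_mulVec_nonneg (Pi.single i 1)
  simpa [Matrix.mulVec, dotProduct, Pi.single_apply, Matrix.star_eq_conjTranspose] using this

/-- If two finite observables `A` and `B` coexist (both are parts of a single
observable `C` via surjections `f`, `g`), then they are jointly measurable: for every state `ρ`
there is a joint probability distribution `μ` on `ΩA × ΩB` whose marginals are the
distributions of `A` and of `B` in the state `ρ`. -/
theorem coexist_implies_jointly_measurable {d : ℕ} {ΩA ΩB ΩC : Type}
    [Fintype ΩA] [Fintype ΩB] [Fintype ΩC] [DecidableEq ΩA] [DecidableEq ΩB]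
    (A : ΩA → Matrix (Fin d) (Fin d) ℂ)
    (B : ΩB → Matrix (Fin d) (Fin d) ℂ)
    (C : ΩC → Matrix (Fin d) (Fin d) ℂ)
    (hApsd : ∀ x, (A x).PosSemidef) (hAsum : ∑ x, A x = 1)
    (hBpsd : ∀ y, (B y).PosSemidef) (hBsum : ∑ y, B y = 1)
    (hCpsd : ∀ z, (C z).PosSemidef) (hCsum : ∑ z, C z = 1)
    (f : ΩC → ΩA) (g : ΩC → ΩB)
    (hf : Function.Surjective f) (hg : Function.Surjective g)
    (hfA : ∀ x, A x = ∑ z ∈ Finset.univ.filter (fun z => f z = x), C z)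
    (hgB : ∀ y, B y = ∑ z ∈ Finset.univ.filter (fun z => g z = y), C z) :
    ∀ ρ : Matrix (Fin d) (Fin d) ℂ, ρ.PosSemidef → ρ.trace = 1 →
      ∃ μ : ΩA × ΩB → ℝ,
        (∀ p, 0 ≤ μ p ∧ μ p ≤ 1) ∧
        (∑ p, μ p = 1) ∧
        (∀ x : ΩA, ((∑ y : ΩB, μ (x, y) : ℝ) : ℂ) = (ρ * A x).trace) ∧
        (∀ y : ΩB, ((∑ x : ΩA, μ (x, y) : ℝ) : ℂ) = (ρ * B y).trace) := by
  intro ρ hρ hρtr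
  -- trace of ρ * C z is a nonneg real
  set t : ΩC → ℝ := fun z => ((ρ * C z).trace).re with ht
  have htz : ∀ z, ((t z : ℂ)) = (ρ * C z).trace ∧ 0 ≤ t z := by
    intro z
    have h := trace_mul_psd_nonneg' hρ (hCpsd z)
    rw [Complex.le_def] at h
    constructor
    · apply Complex.ext <;> simp [ht, ← h.2]
    · simpa using h.1
  set μ : ΩA × ΩB → ℝ := fun p => ∑ z ∈ Finset.univ.filter (fun z => f z = p.1 ∧ g z = p.2), t z
    with hμ
  have hμnn : ∀ p, 0 ≤ μ p := fun p =>
    Finset.sum_nonneg fun z _ => (htz z).2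
  -- complex value of μ p
  have hμc : ∀ p : ΩA × ΩB, ((μ p : ℂ)) =
      ∑ z ∈ Finset.univ.filter (fun z => f z = p.1 ∧ g z = p.2), (ρ * C z).trace := by
    intro p
    push_cast [hμ]
    exact Finset.sum_congr rfl fun z _ => (htz z).1
  -- total sum
  have hsum : ∑ p, μ p = 1 := by
    have : ((∑ p, μ p : ℝ) : ℂ) = 1 := by
      push_cast
      rw [Finset.sum_congr rfl fun p _ => hμc p]
      calc ∑ p : ΩA × ΩB, ∑ z ∈ Finset.univ.filter (fun z => f z = p.1 ∧ g z = p.2),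
              (ρ * C z).trace
            = ∑ p : ΩA × ΩB, ∑ z ∈ Finset.univ.filter (fun z => (f z, g z) = p),
              (ρ * C z).trace := by
              refine Finset.sum_congr rfl fun p _ => ?_
              congr 1
              apply Finset.filter_congr
              intro z _
              simp [Prod.ext_iff]
          _ = ∑ z, (ρ * C z).trace := Finset.sum_fiberwise _ _ _
          _ = (ρ * ∑ z, C z).trace := by rw [Finset.mul_sum, trace_sum]
          _ = 1 := by rw [hCsum, mul_one, hρtr]
    exact_mod_cast this
  refine ⟨μ, fun p => ⟨hμnn p, ?_⟩, hsum, ?_, ?_⟩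
  · calc μ p ≤ ∑ q, μ q := Finset.single_le_sum (fun q _ => hμnn q) (Finset.mem_univ p)
      _ = 1 := hsum
  · intro x
    push_cast
    rw [Finset.sum_congr rfl fun y _ => hμc (x, y)]
    rw [hfA x, Finset.mul_sum, trace_sum]
    rw [← Finset.sum_fiberwise (Finset.univ.filter (fun z => f z = x)) g
      (fun z => (ρ * C z).trace)]
    refine Finset.sum_congr rfl fun y _ => ?_
    congr 1
    ext z
    simp [and_comm]
  · intro y
    push_cast
    rw [Finset.sum_congr rfl fun x _ => hμc (x, y)]
    rw [hgB y, Finset.mul_sum, trace_sum]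
    rw [← Finset.sum_fiberwise (Finset.univ.filter (fun z => g z = y)) f
      (fun z => (ρ * C z).trace)]
    refine Finset.sum_congr rfl fun x _ => ?_
    congr 1
    ext z
    simp [and_comm]
end

section
/- Let A^1,…,A^n be finite observables on a finite-dimensional complex Hilbert space H with nonempty outcome sets Ω_1,…,Ω_n, and let λ_1,…,λ_n ∈ [0,1] with ∑λ_j = 1. Then there exist a finite observable A on H with some finite outcome set Ω_A, and for each j = 1,…,n a surjection f_j : Ω_A → Ω_j and a point x_j ∈ Ω_j, such that f_j(A) = (1−λ_j) I^{x_j} + λ_j A^j, where I^{x_j} is the identity observable on Ω_j concentrated at x_j; i.e. for every x ∈ Ω_j, f_j(A)_x = (1−λ_j)·δ_{x,x_j}·I + λ_j A^j_x. -/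
open Matrix BigOperators Finset
open scoped ComplexOrder

lemma psd_real_smul {d : ℕ} {M : Matrix (Fin d) (Fin d) ℂ} (hM : M.PosSemidef)
    {c : ℝ} (hc : 0 ≤ c) : ((c : ℂ) • M).PosSemidef := by
  constructor
  · unfold Matrix.IsHermitian
    rw [conjTranspose_smul, hM.1.eq]
    congr 1
    simp
  · intro x
    have h0 : (0:ℂ) ≤ (c : ℂ) := by
      rw [Complex.le_def]; simp [hc]
    exact (hM.smul h0).2 x

/-- Given finite observables `A^1,…,A^n` with nonempty outcome sets `Ωs j` and
`λ_j ∈ [0,1]` with `∑λ_j = 1`, there exist a finite observable `Aob` (with a finite outcome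
set `SA` in some type `ΩA`), surjections `f_j : SA → Ωs j` and points `x_j ∈ Ωs j` such that
`f_j(Aob) = (1−λ_j) I^{x_j} + λ_j A^j`, i.e. for every `x ∈ Ωs j`,
`f_j(Aob)_x = (1−λ_j)·δ_{x,x_j}·I + λ_j A^j_x`. -/
theorem noisy_observables_coexist {d n : ℕ} (Ωs : Fin n → Type)
    [∀ j, Fintype (Ωs j)] [∀ j, DecidableEq (Ωs j)] [∀ j, Nonempty (Ωs j)]
    (A : ∀ j, Ωs j → Matrix (Fin d) (Fin d) ℂ)
    (hApsd : ∀ j x, (A j x).PosSemidef)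
    (hAsum : ∀ j, ∑ x, A j x = 1)
    (lam : Fin n → ℝ)
    (hlam : ∀ j, 0 ≤ lam j ∧ lam j ≤ 1)
    (hlam1 : ∑ j, lam j = 1) :
    ∃ (ΩA : Type) (SA : Finset ΩA) (Aob : ΩA → Matrix (Fin d) (Fin d) ℂ),
      (∀ z ∈ SA, (Aob z).PosSemidef) ∧
      (∑ z ∈ SA, Aob z = 1) ∧
      ∀ j : Fin n, ∃ (fj : ΩA → Ωs j) (xj : Ωs j),
        (∀ x : Ωs j, ∃ z ∈ SA, fj z = x) ∧
        ∀ x : Ωs j,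
          ∑ z ∈ SA.filter (fun z => fj z = x), Aob z
            = ((1 : ℂ) - (lam j : ℂ)) •
                (if x = xj then (1 : Matrix (Fin d) (Fin d) ℂ) else 0)
              + (lam j : ℂ) • A j x := by
  classical
  refine ⟨(Σ j, Ωs j), Finset.univ, fun z => (lam z.1 : ℂ) • A z.1 z.2, ?_, ?_, ?_⟩
  · intro z _
    exact psd_real_smul (hApsd z.1 z.2) (hlam z.1).1
  · rw [← Finset.univ_sigma_univ, Finset.sum_sigma]
    have : ∀ j : Fin n, ∑ y : Ωs j, (lam j : ℂ) • A j y = (lam j : ℂ) • (1 : Matrix (Fin d) (Fin d) ℂ) := by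
      intro j
      rw [← Finset.smul_sum, hAsum j]
    simp_rw [this, ← Finset.sum_smul]
    have : ∑ j, (lam j : ℂ) = 1 := by
      rw [← Complex.ofReal_sum, hlam1, Complex.ofReal_one]
    rw [this, one_smul]
  · intro j
    set xj : Ωs j := Classical.arbitrary (Ωs j) with hxj
    refine ⟨fun z => if h : z.1 = j then (congrArg Ωs h) ▸ z.2 else xj, xj, ?_, ?_⟩
    · intro x
      exact ⟨⟨j, x⟩, Finset.mem_univ _, by simp⟩
    · intro x
      rw [Finset.sum_filter, ← Finset.univ_sigma_univ, Finset.sum_sigma]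
      rw [Fintype.sum_eq_add_sum_compl j]
      have h1 : ∑ y : Ωs j,
          (if (if h : (⟨j, y⟩ : Σ k, Ωs k).1 = j then (congrArg Ωs h) ▸ (⟨j, y⟩ : Σ k, Ωs k).2 else xj) = x
            then (lam j : ℂ) • A j y else 0) = (lam j : ℂ) • A j x := by
        simp
      have h2 : ∀ k ∈ ({j}ᶜ : Finset (Fin n)), ∑ y : Ωs k,
          (if (if h : (⟨k, y⟩ : Σ k, Ωs k).1 = j then (congrArg Ωs h) ▸ (⟨k, y⟩ : Σ k, Ωs k).2 else xj) = x
            then (lam k : ℂ) • A k y else 0)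
          = if x = xj then (lam k : ℂ) • (1 : Matrix (Fin d) (Fin d) ℂ) else 0 := by
        intro k hk
        have hkj : k ≠ j := by simpa using hk
        simp only [dif_neg hkj]
        by_cases hx : x = xj
        · rw [if_pos hx, Finset.sum_congr rfl (fun y _ => if_pos hx.symm),
            ← Finset.smul_sum, hAsum k]
        · have : xj ≠ x := fun h => hx h.symm
          simp [this, hx]
      rw [h1, Finset.sum_congr rfl h2]
      by_cases hx : x = xj
      · simp only [if_pos hx]
        have : ∑ k ∈ ({j}ᶜ : Finset (Fin n)), (lam k : ℂ) • (1 : Matrix (Fin d) (Fin d) ℂ)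
            = ((1 : ℂ) - (lam j : ℂ)) • (1 : Matrix (Fin d) (Fin d) ℂ) := by
          rw [← Finset.sum_smul]
          congr 1
          have := Fintype.sum_eq_add_sum_compl j (fun k => (lam k : ℂ))
          have hs : ∑ k, (lam k : ℂ) = 1 := by
            rw [← Complex.ofReal_sum, hlam1, Complex.ofReal_one]
          rw [hs] at this
          linear_combination -this
        rw [this, add_comm]
      · simp only [if_neg hx, Finset.sum_const_zero, smul_zero, add_zero, zero_add]
end

section
/- Let A and B be finite observables on a finite-dimensional complex Hilbert space H with outcome sets Ω_A and Ω_B. Then the sequential product L^A∘L^B of the Lüders instruments is itself a Lüders instrument — i.e. there exists a finite observable C on Ω_A × Ω_B with (L^A∘L^B)_{(x,y)}(ρ) = C_{(x,y)}^{1/2} ρ C_{(x,y)}^{1/2} for all ρ and all (x,y) — if and only if A and B commute (A_x B_y = B_y A_x for all x ∈ Ω_A, y ∈ Ω_B), and in that case L^A∘L^B = L^{A∘B}, i.e. B_y^{1/2} A_x^{1/2} ρ A_x^{1/2} B_y^{1/2} = (A_x^{1/2} B_y A_x^{1/2})^{1/2} ρ (A_x^{1/2} B_y A_x^{1/2})^{1/2}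 for all ρ, x, y. -/
open Matrix BigOperators Finset
open scoped ComplexOrder

/-- The positive semidefinite square root of a positive semidefinite matrix
(the definition of `Matrix.PosSemidef.sqrt` in Mathlib of December 2024, since removed). -/
noncomputable def Matrix.PosSemidef.sqrt {n : Type*} [Fintype n] [DecidableEq n] {𝕜 : Type*}
    [RCLike 𝕜] {A : Matrix n n 𝕜} (hA : A.PosSemidef) : Matrix n n 𝕜 :=
  hA.1.eigenvectorUnitary.1 * diagonal ((↑) ∘ (√·) ∘ hA.1.eigenvalues) *
  (star hA.1.eigenvectorUnitary : Matrix n n 𝕜)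

section SqrtPort
open scoped MatrixOrder

lemma Matrix.PosSemidef.sqrt_eq_cfc_port {n : Type*} [Fintype n] [DecidableEq n]
    {A : Matrix n n ℂ} (hA : A.PosSemidef) : hA.sqrt = CFC.sqrt A := by
  rw [CFC.sqrt_eq_real_sqrt A hA.nonneg,
    cfcₙ_eq_cfc (hf := Real.continuous_sqrt.continuousOn) (hf0 := Real.sqrt_zero), hA.1.cfc_eq, IsHermitian.cfc, Unitary.conjStarAlgAut_apply]
  rfl

lemma Matrix.PosSemidef.posSemidef_sqrt {n : Type*} [Fintype n] [DecidableEq n]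
    {A : Matrix n n ℂ} (hA : A.PosSemidef) : hA.sqrt.PosSemidef := by
  rw [hA.sqrt_eq_cfc_port]
  exact (CFC.sqrt_nonneg A).posSemidef

lemma Matrix.PosSemidef.sqrt_mul_self {n : Type*} [Fintype n] [DecidableEq n]
    {A : Matrix n n ℂ} (hA : A.PosSemidef) : hA.sqrt * hA.sqrt = A := by
  rw [hA.sqrt_eq_cfc_port]
  exact CFC.sqrt_mul_sqrt_self A hA.nonneg

lemma Matrix.PosSemidef.eq_sqrt_of_sq_eq {n : Type*} [Fintype n] [DecidableEq n]
    {A : Matrix n n ℂ} (hA : A.PosSemidef) {B : Matrix n n ℂ} (hB : B.PosSemidef)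
    (hAB : A ^ 2 = B) : A = hB.sqrt := by
  rw [hB.sqrt_eq_cfc_port, ← hAB, pow_two]
  exact (CFC.sqrt_mul_self A hA.nonneg).symm

end SqrtPort


private lemma entry_eq {n : Type} [Fintype n] [DecidableEq n]
    (M N : Matrix n n ℂ) (i j k l : n) :
    (M * Matrix.single i j (1:ℂ) * N) k l = M k i * N j l := by
  simp [Matrix.mul_apply, Matrix.single, ite_and, Finset.mul_sum, Finset.sum_mul]

private lemma trace_hm {n : Type} [Fintype n] [DecidableEq n] (M : Matrix n n ℂ) :
    (Mᴴ * M).trace = ((∑ k, ∑ l, Complex.normSq (M l k) : ℝ) : ℂ) := by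
  push_cast
  simp [Matrix.trace, Matrix.diag, Matrix.mul_apply, Matrix.conjTranspose_apply,
    Complex.normSq_eq_conj_mul_self]

private lemma psd_trace_eq {n : Type} [Fintype n] [DecidableEq n]
    {T : Matrix n n ℂ} (hT : T.PosSemidef) :
    ∃ r : ℝ, 0 ≤ r ∧ T.trace = (r : ℂ) ∧ (T ≠ 0 → 0 < r) := by
  have h1 : T = hT.sqrtᴴ * hT.sqrt := by
    rw [hT.posSemidef_sqrt.1, hT.sqrt_mul_self]
  refine ⟨∑ k, ∑ l, Complex.normSq (hT.sqrt l k),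
    Finset.sum_nonneg fun _ _ => Finset.sum_nonneg fun _ _ => Complex.normSq_nonneg _, ?_, ?_⟩
  · conv_lhs => rw [h1]
    rw [trace_hm]
  · intro hne
    rcases (show (0:ℝ) ≤ ∑ k, ∑ l, Complex.normSq (hT.sqrt l k) from Finset.sum_nonneg fun _ _ => Finset.sum_nonneg fun _ _ => Complex.normSq_nonneg _).lt_or_eq with h | h
    · exact h
    · exfalso
      apply hne
      have hz : ∀ k l, Complex.normSq (hT.sqrt l k) = 0 := by
        intro k l
        have hsum := (Finset.sum_eq_zero_iff_of_nonneg (fun k _ =>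
          Finset.sum_nonneg fun _ _ => Complex.normSq_nonneg _)).mp h.symm k (Finset.mem_univ k)
        exact (Finset.sum_eq_zero_iff_of_nonneg (fun l _ => Complex.normSq_nonneg _)).mp hsum l
          (Finset.mem_univ l)
      have hs0 : hT.sqrt = 0 := by
        ext l k
        exact Complex.normSq_eq_zero.mp (hz k l)
      rw [← hT.sqrt_mul_self, hs0, mul_zero]

private lemma psd_mul_trace {n : Type} [Fintype n] [DecidableEq n]
    {P Q : Matrix n n ℂ} (hP : P.PosSemidef) (hQ : Q.PosSemidef) :
    ∃ s : ℝ, 0 ≤ s ∧ (Q * P).trace = (s : ℂ) := by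
  have e : (hP.sqrt * hQ.sqrt)ᴴ * (hP.sqrt * hQ.sqrt) = hQ.sqrt * P * hQ.sqrt := by
    rw [conjTranspose_mul, hP.posSemidef_sqrt.1, hQ.posSemidef_sqrt.1]
    calc hQ.sqrt * hP.sqrt * (hP.sqrt * hQ.sqrt)
        = hQ.sqrt * (hP.sqrt * hP.sqrt) * hQ.sqrt := by simp only [mul_assoc]
      _ = hQ.sqrt * P * hQ.sqrt := by rw [hP.sqrt_mul_self]
  have etr : (Q * P).trace = ((hP.sqrt * hQ.sqrt)ᴴ * (hP.sqrt * hQ.sqrt)).trace := by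
    rw [e, Matrix.trace_mul_cycle, hQ.sqrt_mul_self]
  exact ⟨∑ k, ∑ l, Complex.normSq ((hP.sqrt * hQ.sqrt) l k),
    Finset.sum_nonneg fun _ _ => Finset.sum_nonneg fun _ _ => Complex.normSq_nonneg _,
    by rw [etr, trace_hm]⟩

private lemma key_forward {n : Type} [Fintype n] [DecidableEq n]
    {P Q T : Matrix n n ℂ} (hP : P.PosSemidef) (hQ : Q.PosSemidef) (hT : T.PosSemidef)
    (hrel : ∀ ρ : Matrix n n ℂ, Q * (P * ρ * P) * Q = T * ρ * T) :
    Q * P = P * Q := by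
  set S := Q * P with hS
  have hSadj : Sᴴ = P * Q := by rw [hS, conjTranspose_mul, hP.1, hQ.1]
  rw [← hSadj]
  have hrelE : ∀ i j k l, S k i * (starRingEnd ℂ) (S l j) = T k i * (starRingEnd ℂ) (T l j) := by
    intro i j k l
    have h := congrFun (congrFun (hrel (Matrix.single i j 1)) k) l
    have hL : Q * (P * Matrix.single i j 1 * P) * Q
        = S * Matrix.single i j 1 * Sᴴ := by
      rw [hSadj, hS]; simp only [mul_assoc]
    rw [hL] at h
    rw [entry_eq, entry_eq] at h
    have hSc : Sᴴ j l = (starRingEnd ℂ) (S l j) := rfl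
    have hTc : T j l = (starRingEnd ℂ) (T l j) := (hT.1.apply j l).symm
    rw [hSc, hTc] at h
    exact h
  by_cases hS0 : S = 0
  · rw [hS0]; simp
  · have hex : ∃ k i, S k i ≠ 0 := by
      by_contra hc
      push_neg at hc
      exact hS0 (by ext k i; exact hc k i)
    obtain ⟨k0, i0, hk0⟩ := hex
    have hnorm : ∀ k i, Complex.normSq (S k i) = Complex.normSq (T k i) := by
      intro k i
      have h := hrelE i i k k
      rw [Complex.mul_conj, Complex.mul_conj] at h
      exact_mod_cast h
    have hT0 : T k0 i0 ≠ 0 := by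
      intro h0
      apply hk0
      have := hnorm k0 i0
      rw [h0] at this
      simpa [Complex.normSq_eq_zero] using this
    set c : ℂ := S k0 i0 / T k0 i0 with hc
    have hs0 : (starRingEnd ℂ) (S k0 i0) ≠ 0 := by simpa using hk0
    have hSc : ∀ k i, S k i = c * T k i := by
      intro k i
      rw [hc, div_mul_eq_mul_div, eq_div_iff hT0, mul_comm (S k0 i0) (T k i)]
      have e1 : S k i * (starRingEnd ℂ) (S k0 i0) = T k i * (starRingEnd ℂ) (T k0 i0) :=
        hrelE i i0 k k0
      have e2 : S k0 i0 * (starRingEnd ℂ) (S k0 i0) = T k0 i0 * (starRingEnd ℂ) (T k0 i0) :=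
        hrelE i0 i0 k0 k0
      apply mul_right_cancel₀ hs0
      calc S k i * T k0 i0 * (starRingEnd ℂ) (S k0 i0)
          = (S k i * (starRingEnd ℂ) (S k0 i0)) * T k0 i0 := by ring
        _ = (T k i * (starRingEnd ℂ) (T k0 i0)) * T k0 i0 := by rw [e1]
        _ = T k i * (T k0 i0 * (starRingEnd ℂ) (T k0 i0)) := by ring
        _ = T k i * (S k0 i0 * (starRingEnd ℂ) (S k0 i0)) := by rw [e2]
        _ = T k i * S k0 i0 * (starRingEnd ℂ) (S k0 i0) := by ring
    have htr : S.trace = c * T.trace := by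
      simp only [Matrix.trace, Matrix.diag, Finset.mul_sum]
      exact Finset.sum_congr rfl fun k _ => hSc k k
    obtain ⟨r, hr0, hrT, hrpos⟩ := psd_trace_eq hT
    obtain ⟨s, hs0', hsS⟩ := psd_mul_trace hP hQ
    have hTne : T ≠ 0 := fun h0 => hT0 (by simp [h0])
    have hrpos' : 0 < r := hrpos hTne
    have hceq : c = ((s / r : ℝ) : ℂ) := by
      have hrne : (r : ℂ) ≠ 0 := by exact_mod_cast hrpos'.ne'
      have h2 : S.trace = (s : ℂ) := by rw [hS]; exact hsS
      rw [h2, hrT] at htr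
      rw [Complex.ofReal_div]
      exact (eq_div_iff hrne).mpr htr.symm
    have hcnorm : Complex.normSq c = 1 := by
      rw [hc, Complex.normSq_div, hnorm k0 i0,
        div_self (fun h0 => hT0 (Complex.normSq_eq_zero.mp h0))]
    have hc1 : c = 1 := by
      rw [hceq] at hcnorm ⊢
      rw [Complex.normSq_ofReal] at hcnorm
      have hsr : 0 ≤ s / r := div_nonneg hs0' hr0
      have : s / r = 1 := by nlinarith
      rw [this, Complex.ofReal_one]
    have hST : S = T := by
      ext k i
      rw [hSc k i, hc1, one_mul]
    rw [hST]
    exact hT.1.symm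

private lemma commute_sqrt {n : Type} [Fintype n] [DecidableEq n]
    {A : Matrix n n ℂ} (hA : A.PosSemidef) (X : Matrix n n ℂ) (h : X * A = A * X) :
    X * hA.sqrt = hA.sqrt * X := by
  set U : Matrix n n ℂ := (hA.1.eigenvectorUnitary : Matrix n n ℂ) with hUdef
  have hU1 : U * star U = 1 := Matrix.mem_unitaryGroup_iff.mp hA.1.eigenvectorUnitary.2
  have hU2 : star U * U = 1 := Matrix.mem_unitaryGroup_iff'.mp hA.1.eigenvectorUnitary.2
  have hcan1 : ∀ W : Matrix n n ℂ, star U * (U * W) = W := fun W => by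
    rw [← mul_assoc, hU2, one_mul]
  have hcan2 : ∀ W : Matrix n n ℂ, U * (star U * W) = W := fun W => by
    rw [← mul_assoc, hU1, one_mul]
  set ev : n → ℝ := hA.1.eigenvalues with hev
  set D : Matrix n n ℂ := Matrix.diagonal (RCLike.ofReal ∘ ev) with hD
  set Dr : Matrix n n ℂ := Matrix.diagonal ((↑) ∘ Real.sqrt ∘ ev) with hDr
  set Y : Matrix n n ℂ := star U * X * U with hY
  have hsq : hA.sqrt = U * Dr * star U := rfl
  have hspec : A = U * D * star U := hA.1.spectral_theorem
  have hXU : X = U * Y * star U := by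
    rw [hY]
    calc X = 1 * X * 1 := by rw [one_mul, mul_one]
      _ = (U * star U) * X * (U * star U) := by rw [hU1]
      _ = U * (star U * X * U) * star U := by simp only [mul_assoc]
  have cancel : ∀ M N : Matrix n n ℂ, U * M * star U = U * N * star U → M = N := by
    intro M N hMN
    have h2 := congrArg (fun Z => star U * Z * U) hMN
    simpa only [mul_assoc, hcan1, hU2, mul_one] using h2
  have hYD : Y * D = D * Y := by
    apply cancel
    calc U * (Y * D) * star U = (U * Y * star U) * (U * D * star U) := by
          simp only [mul_assoc, hcan1, hcan2]
      _ = X * A := by rw [← hXU, ← hspec]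
      _ = A * X := h
      _ = (U * D * star U) * (U * Y * star U) := by rw [← hXU, ← hspec]
      _ = U * (D * Y) * star U := by simp only [mul_assoc, hcan1, hcan2]
  have hkey : ∀ i j, Y i j * ((Real.sqrt (ev j) : ℝ) : ℂ) = ((Real.sqrt (ev i) : ℝ) : ℂ) * Y i j := by
    intro i j
    by_cases hy : Y i j = 0
    · simp [hy]
    · have h1 : (Y * D) i j = Y i j * ((ev j : ℝ) : ℂ) := by
        rw [hD, Matrix.mul_diagonal]; rfl
      have h2 : (D * Y) i j = ((ev i : ℝ) : ℂ) * Y i j := by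
        rw [hD, Matrix.diagonal_mul]; rfl
      have h3 : Y i j * ((ev j : ℝ) : ℂ) = ((ev i : ℝ) : ℂ) * Y i j := by
        rw [← h1, ← h2]; exact congrFun (congrFun hYD i) j
      rw [mul_comm ((ev i : ℝ) : ℂ)] at h3
      have h4 : ((ev j : ℝ) : ℂ) = ((ev i : ℝ) : ℂ) := mul_left_cancel₀ hy h3
      have h5 : ev j = ev i := by exact_mod_cast h4
      rw [h5, mul_comm]
  have hYDr : Y * Dr = Dr * Y := by
    ext i j
    rw [hDr, Matrix.mul_diagonal, Matrix.diagonal_mul]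
    exact hkey i j
  calc X * hA.sqrt = (U * Y * star U) * (U * Dr * star U) := by rw [hsq, ← hXU]
    _ = U * (Y * Dr) * star U := by simp only [mul_assoc, hcan1, hcan2]
    _ = U * (Dr * Y) * star U := by rw [hYDr]
    _ = (U * Dr * star U) * (U * Y * star U) := by simp only [mul_assoc, hcan1, hcan2]
    _ = hA.sqrt * X := by rw [hsq, ← hXU]


/-- For finite observables `A` and `B`, the sequential product `L^A∘L^B` of the
Lüders instruments is itself a Lüders instrument (i.e. there is a finite observable `C` on
`ΩA × ΩB` with `(L^A∘L^B)_{(x,y)}(ρ) = C_{(x,y)}^{1/2} ρ C_{(x,y)}^{1/2}` for all `ρ, x, y`)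
if and only if `A` and `B` commute; and if `A` and `B` commute then `L^A∘L^B = L^{A∘B}`, i.e.
`B_y^{1/2} A_x^{1/2} ρ A_x^{1/2} B_y^{1/2} = (A_x^{1/2} B_y A_x^{1/2})^{1/2} ρ (A_x^{1/2} B_y A_x^{1/2})^{1/2}`
for all `ρ, x, y` (the square root of `A_x^{1/2} B_y A_x^{1/2}` being taken with respect to
any proof `h` of its positive semidefiniteness). -/
theorem luders_sequential_product_is_luders_iff_commute {d : ℕ} {ΩA ΩB : Type}
    [Fintype ΩA] [Fintype ΩB]
    (A : ΩA → Matrix (Fin d) (Fin d) ℂ)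
    (hApsd : ∀ x, (A x).PosSemidef) (hAsum : ∑ x, A x = 1)
    (B : ΩB → Matrix (Fin d) (Fin d) ℂ)
    (hBpsd : ∀ y, (B y).PosSemidef) (hBsum : ∑ y, B y = 1) :
    ((∃ (C : ΩA × ΩB → Matrix (Fin d) (Fin d) ℂ) (hCpsd : ∀ p, (C p).PosSemidef),
        (∑ p, C p = 1) ∧
        ∀ (x : ΩA) (y : ΩB) (ρ : Matrix (Fin d) (Fin d) ℂ),
          (hBpsd y).sqrt * ((hApsd x).sqrt * ρ * (hApsd x).sqrt) * (hBpsd y).sqrt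
            = (hCpsd (x, y)).sqrt * ρ * (hCpsd (x, y)).sqrt)
      ↔ (∀ (x : ΩA) (y : ΩB), A x * B y = B y * A x)) ∧
    ((∀ (x : ΩA) (y : ΩB), A x * B y = B y * A x) →
      ∀ (x : ΩA) (y : ΩB) (ρ : Matrix (Fin d) (Fin d) ℂ)
        (h : ((hApsd x).sqrt * B y * (hApsd x).sqrt).PosSemidef),
        (hBpsd y).sqrt * ((hApsd x).sqrt * ρ * (hApsd x).sqrt) * (hBpsd y).sqrt
          = h.sqrt * ρ * h.sqrt) := by
  have part2 : (∀ (x : ΩA) (y : ΩB), A x * B y = B y * A x) →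
      ∀ (x : ΩA) (y : ΩB) (ρ : Matrix (Fin d) (Fin d) ℂ)
        (h : ((hApsd x).sqrt * B y * (hApsd x).sqrt).PosSemidef),
        (hBpsd y).sqrt * ((hApsd x).sqrt * ρ * (hApsd x).sqrt) * (hBpsd y).sqrt
          = h.sqrt * ρ * h.sqrt := by
    intro hcomm x y ρ h
    set sA := (hApsd x).sqrt with hsA
    set sB := (hBpsd y).sqrt with hsB
    have c1 : B y * sA = sA * B y := commute_sqrt (hApsd x) (B y) (hcomm x y).symm
    have c2 : sA * sB = sB * sA := commute_sqrt (hBpsd y) sA c1.symm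
    have cc : Commute sA sB := c2
    set ssB := ((hBpsd y).posSemidef_sqrt).sqrt with hssB
    have c3 : sA * ssB = ssB * sA := commute_sqrt ((hBpsd y).posSemidef_sqrt) sA c2
    have hssB2 : ssB * ssB = sB := ((hBpsd y).posSemidef_sqrt).sqrt_mul_self
    have hMpsd : (sB * sA).PosSemidef := by
      have hMe : sB * sA = ssBᴴ * sA * ssB := by
        rw [((hBpsd y).posSemidef_sqrt).posSemidef_sqrt.1]
        calc sB * sA = ssB * ssB * sA := by rw [hssB2]
          _ = ssB * (ssB * sA) := by rw [mul_assoc]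
          _ = ssB * (sA * ssB) := by rw [← c3]
          _ = ssB * sA * ssB := by rw [mul_assoc]
      exact hMe ▸ ((hApsd x).posSemidef_sqrt.conjTranspose_mul_mul_same ssB)
    have hMsq : (sB * sA) ^ 2 = sA * B y * sA := by
      have h1 : (sB * sA) * (sB * sA) = sB * sB * (sA * sA) := by
        calc sB * sA * (sB * sA) = sB * (sA * sB) * sA := by simp only [mul_assoc]
          _ = sB * (sB * sA) * sA := by rw [cc.eq]
          _ = sB * sB * (sA * sA) := by simp only [mul_assoc]
      have h2 : sA * B y * sA = sB * sB * (sA * sA) := by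
        rw [← (hBpsd y).sqrt_mul_self, ← hsB, (cc.mul_right cc).eq]
        simp only [mul_assoc]
      rw [pow_two, h1, h2]
    have hMeq : sB * sA = h.sqrt := hMpsd.eq_sqrt_of_sq_eq h hMsq
    rw [← hMeq]
    calc sB * (sA * ρ * sA) * sB = sB * sA * ρ * (sA * sB) := by simp only [mul_assoc]
      _ = sB * sA * ρ * (sB * sA) := by rw [cc.eq]
  refine ⟨⟨?_, ?_⟩, part2⟩
  · rintro ⟨C, hCpsd, hCsum, hEq⟩ x y
    have hQP : (hBpsd y).sqrt * (hApsd x).sqrt = (hApsd x).sqrt * (hBpsd y).sqrt :=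
      key_forward ((hApsd x).posSemidef_sqrt) ((hBpsd y).posSemidef_sqrt)
        ((hCpsd (x, y)).posSemidef_sqrt) (hEq x y)
    have cc : Commute ((hApsd x).sqrt) ((hBpsd y).sqrt) := hQP.symm
    have d2 := (cc.mul_right cc).mul_left (cc.mul_right cc)
    rw [← (hApsd x).sqrt_mul_self, ← (hBpsd y).sqrt_mul_self]
    exact d2.eq
  · intro hcomm
    have hCpsd : ∀ p : ΩA × ΩB, ((hApsd p.1).sqrt * B p.2 * (hApsd p.1).sqrt).PosSemidef :=
      fun p => by
        have hh := (hBpsd p.2).mul_mul_conjTranspose_same ((hApsd p.1).sqrt)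
        rwa [((hApsd p.1).posSemidef_sqrt).1] at hh
    refine ⟨fun p => (hApsd p.1).sqrt * B p.2 * (hApsd p.1).sqrt, hCpsd, ?_, ?_⟩
    · rw [Fintype.sum_prod_type]
      have hx : ∀ x : ΩA, ∑ y, (hApsd x).sqrt * B y * (hApsd x).sqrt = A x := by
        intro x
        calc ∑ y, (hApsd x).sqrt * B y * (hApsd x).sqrt
            = (hApsd x).sqrt * (∑ y, B y) * (hApsd x).sqrt := by
              rw [Finset.mul_sum, Finset.sum_mul]
          _ = (hApsd x).sqrt * 1 * (hApsd x).sqrt := by rw [hBsum]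
          _ = A x := by rw [mul_one, (hApsd x).sqrt_mul_self]
      calc ∑ x, ∑ y, (hApsd x).sqrt * B y * (hApsd x).sqrt
          = ∑ x, A x := Finset.sum_congr rfl fun x _ => hx x
        _ = 1 := hAsum
    · intro x y ρ
      exact part2 hcomm x y ρ (hCpsd (x, y))
end
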